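/- Let b ≥ 2 and let x = (x_0, x_1, …) be a periodic sequence over alphabet A (|A| = b) whose period is m·b^k and whose fundamental period is a (k,m)-perfect necklace. Then for every test function t : A^k → ℝ, the sequence T_n = |(1/n) Σ_{i=0}^{n−1} t(x_i,…,x_{i+k−1}) − τ| converges to 0 as n → ∞, where τ = b^{−k} Σ_{w ∈ A^k} t(w). Moreover, for every integer h > k + log_b m there exists a word w of length h not occurring in x, so the indicator test of size h given by t̃ = 1_{w} has limsup T̃_n = τ̃ = b^{−h} > 0, i.e., x fails some test of size h. -/

import Mathlib

/-- `w` (a word of length `k`) occurs at position `i` in the cyclic word given by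
the first `L` symbols of `s`. -/
def OccursAt {A : Type*} {k : ℕ} (s : ℕ → A) (L : ℕ) (w : Fin k → A) (i : ℕ) : Prop :=
  ∀ j : Fin k, s ((i + (j : ℕ)) % L) = w j

/-- The cyclic word given by the first `n * |A| ^ k` values of `s` is a
`(k,n)`-perfect necklace: every word of length `k` occurs exactly `n` times, and
the occurrence positions are pairwise distinct modulo `n`. -/
def IsPerfectNecklace {A : Type*} [Fintype A] (k n : ℕ) (s : ℕ → A) : Prop :=
  ∀ w : Fin k → A,
    Nat.card {i : ℕ // i < n * Fintype.card A ^ k ∧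
      OccursAt s (n * Fintype.card A ^ k) w i} = n ∧
    ∀ i i' : ℕ, i < n * Fintype.card A ^ k → i' < n * Fintype.card A ^ k →
      OccursAt s (n * Fintype.card A ^ k) w i →
      OccursAt s (n * Fintype.card A ^ k) w i' →
      i % n = i' % n → i = i'

open Finset in
lemma sum_block (g : ℕ → ℝ) (L : ℕ) (hg : ∀ i, g (i + L) = g i) (n : ℕ) :
    ∑ i ∈ Finset.range (n + L), g i
      = (∑ i ∈ Finset.range n, g i) + ∑ i ∈ Finset.range L, g i := by
  induction n with
  | zero => simp
  | succ n ih =>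
    have e : n + 1 + L = (n + L) + 1 := by ring
    rw [e, Finset.sum_range_succ, ih, Finset.sum_range_succ, hg n]
    ring

lemma sum_mod_eq (g : ℕ → ℝ) (L : ℕ) (hL : 0 < L) (hg : ∀ i, g (i + L) = g i)
    (h0 : ∑ i ∈ Finset.range L, g i = 0) (n : ℕ) :
    ∑ i ∈ Finset.range n, g i = ∑ i ∈ Finset.range (n % L), g i := by
  induction n using Nat.strong_induction_on with
  | _ n ih =>
    rcases lt_or_ge n L with h | h
    · rw [Nat.mod_eq_of_lt h]
    · have hn : n = (n - L) + L := by omega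
      rw [hn, sum_block g L hg, h0, add_zero, Nat.add_mod_right]
      exact ih (n - L) (by omega)

lemma cesaro (f : ℕ → ℝ) (L : ℕ) (hL : 0 < L) (hf : ∀ i, f (i + L) = f i) :
    Filter.Tendsto
      (fun n : ℕ => |(1 / (n : ℝ)) * ∑ i ∈ Finset.range n, f i
        - (∑ i ∈ Finset.range L, f i) / (L : ℝ)|)
      Filter.atTop (nhds 0) := by
  set τ : ℝ := (∑ i ∈ Finset.range L, f i) / (L : ℝ) with hτ
  set g : ℕ → ℝ := fun i => f i - τ with hgdef
  have hLne : (L : ℝ) ≠ 0 := Nat.cast_ne_zero.mpr hL.ne'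
  have hgper : ∀ i, g (i + L) = g i := fun i => by simp [hgdef, hf i]
  have h0 : ∑ i ∈ Finset.range L, g i = 0 := by
    simp only [hgdef, Finset.sum_sub_distrib, Finset.sum_const, Finset.card_range,
      nsmul_eq_mul, hτ]
    field_simp
    ring
  set C : ℝ := ∑ i ∈ Finset.range L, |g i| with hC
  have hbound : ∀ n : ℕ, |∑ i ∈ Finset.range n, g i| ≤ C := by
    intro n
    rw [sum_mod_eq g L hL hgper h0 n]
    calc |∑ i ∈ Finset.range (n % L), g i| ≤ ∑ i ∈ Finset.range (n % L), |g i| :=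
          Finset.abs_sum_le_sum_abs _ _
      _ ≤ C := Finset.sum_le_sum_of_subset_of_nonneg
          (Finset.range_subset_range.mpr (Nat.mod_lt n hL).le) (fun i _ _ => abs_nonneg _)
  have key : ∀ n : ℕ, 1 ≤ n → |(1 / (n : ℝ)) * ∑ i ∈ Finset.range n, f i - τ| ≤ C / n := by
    intro n hn
    have hn' : (0 : ℝ) < n := by exact_mod_cast hn
    have hsg : ∑ i ∈ Finset.range n, g i = ∑ i ∈ Finset.range n, f i - n * τ := by
      simp [hgdef, Finset.sum_sub_distrib]
    have e : (1 / (n : ℝ)) * ∑ i ∈ Finset.range n, f i - τ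
        = (1 / (n : ℝ)) * ∑ i ∈ Finset.range n, g i := by
      rw [hsg]; field_simp
    rw [e, abs_mul, abs_of_nonneg (by positivity : (0:ℝ) ≤ 1 / (n:ℝ))]
    calc (1 / (n:ℝ)) * |∑ i ∈ Finset.range n, g i| ≤ (1 / (n:ℝ)) * C := by
          apply mul_le_mul_of_nonneg_left (hbound n) (by positivity)
      _ = C / n := by ring
  exact squeeze_zero' (Filter.Eventually.of_forall fun n => abs_nonneg _)
    (Filter.eventually_atTop.mpr ⟨1, key⟩) (tendsto_const_div_atTop_nhds_zero_nat C)

/-- A periodic sequence whose fundamental cycle is a `(k,m)`-perfect necklace passes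
every statistical test of size `k`: the empirical mean of any test function `t` on
sliding windows of length `k` converges to its expected value `τ = b^{−k} Σ_w t(w)`.
But for every `h > k + log_b m` there is a word `w` of length `h` not occurring in the
sequence, and the indicator test of `w` (of size `h`) rejects it: its statistic `T̃_n`
converges to `τ̃ = b^{−h} > 0` instead of to `0`. -/
theorem perfect_passes_small_tests_fails_large {A : Type*} [Fintype A] [DecidableEq A]
    (b k m : ℕ) (hb : Fintype.card A = b) (hb2 : 2 ≤ b) (hk : 0 < k) (hm : 0 < m)
    (x : ℕ → A) (hper : ∀ i : ℕ, x (i + m * b ^ k) = x i)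
    (hperf : IsPerfectNecklace k m x) :
    (∀ t : (Fin k → A) → ℝ,
      Filter.Tendsto
        (fun n : ℕ =>
          |(1 / (n : ℝ)) * ∑ i ∈ Finset.range n, t (fun j => x (i + (j : ℕ))) -
            (∑ w : Fin k → A, t w) / (b : ℝ) ^ k|)
        Filter.atTop (nhds 0)) ∧
    (∀ h : ℕ, (k : ℝ) + Real.logb b m < h →
      ∃ w : Fin h → A,
        (∀ i : ℕ, ¬ ∀ j : Fin h, x (i + (j : ℕ)) = w j) ∧
        Filter.Tendsto
          (fun n : ℕ =>
            |(1 / (n : ℝ)) * ∑ i ∈ Finset.range n,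
                (if ∀ j : Fin h, x (i + (j : ℕ)) = w j then (1 : ℝ) else 0) -
              1 / (b : ℝ) ^ h|)
          Filter.atTop (nhds (1 / (b : ℝ) ^ h)) ∧
        0 < 1 / (b : ℝ) ^ h) := by
  have hbpos : 0 < b := by omega
  unfold IsPerfectNecklace at hperf
  rw [hb] at hperf
  set L := m * b ^ k with hLdef
  have hL : 0 < L := Nat.mul_pos hm (pow_pos hbpos k)
  have hxmod : ∀ p : ℕ, x p = x (p % L) := by
    intro p
    conv_lhs => rw [← Nat.mod_add_div p L]
    generalize p / L = q
    induction q with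
    | zero => simp
    | succ q ih =>
      rw [show p % L + L * (q + 1) = (p % L + L * q) + L by ring, hper, ih]
  have hcount : ∀ w : Fin k → A,
      ((Finset.range L).filter (fun i => ∀ j : Fin k, x (i + (j : ℕ)) = w j)).card = m := by
    intro w
    have h1 := (hperf w).1
    have hOcc : ∀ i, OccursAt x L w i ↔ ∀ j : Fin k, x (i + (j : ℕ)) = w j := by
      intro i
      unfold OccursAt
      exact forall_congr' fun j => by rw [← hxmod (i + (j : ℕ))]
    have hset : {i : ℕ | i < L ∧ OccursAt x L w i} =
        ↑((Finset.range L).filter (fun i => ∀ j : Fin k, x (i + (j : ℕ)) = w j)) := by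
      ext i
      simp [Finset.mem_filter, hOcc i, and_comm]
    have h2 : Nat.card {i : ℕ // i < L ∧ OccursAt x L w i}
        = ((Finset.range L).filter (fun i => ∀ j : Fin k, x (i + (j : ℕ)) = w j)).card := by
      rw [← Set.ncard_coe_finset, ← hset, ← Nat.card_coe_set_eq]
      rfl
    rw [← h2]
    exact h1
  have hsum : ∀ t : (Fin k → A) → ℝ,
      ∑ i ∈ Finset.range L, t (fun j => x (i + (j : ℕ)))
        = (m : ℝ) * ∑ w : Fin k → A, t w := by
    intro t
    rw [← Finset.sum_fiberwise (Finset.range L)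
      (fun i => (fun j : Fin k => x (i + (j : ℕ))))
      (fun i => t (fun j : Fin k => x (i + (j : ℕ)))), Finset.mul_sum]
    refine Finset.sum_congr rfl fun w _ => ?_
    have e1 : ∀ i ∈ (Finset.range L).filter
        (fun i => (fun j : Fin k => x (i + (j : ℕ))) = w),
        t (fun j : Fin k => x (i + (j : ℕ))) = t w := fun i hi => by
      rw [(Finset.mem_filter.mp hi).2]
    rw [Finset.sum_congr rfl e1, Finset.sum_const, nsmul_eq_mul]
    congr 1
    have e2 : (Finset.range L).filter (fun i => (fun j : Fin k => x (i + (j : ℕ))) = w)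
        = (Finset.range L).filter (fun i => ∀ j : Fin k, x (i + (j : ℕ)) = w j) := by
      apply Finset.filter_congr
      intro i _
      simp [funext_iff]
    rw [e2, hcount w]
  constructor
  · intro t
    have hfp : ∀ i, t (fun j : Fin k => x ((i + L) + (j : ℕ)))
        = t (fun j : Fin k => x (i + (j : ℕ))) := by
      intro i
      congr 1
      funext j
      rw [show i + L + (j : ℕ) = (i + (j : ℕ)) + L by ring]
      exact hper (i + (j : ℕ))
    have hc := cesaro (fun i => t (fun j : Fin k => x (i + (j : ℕ)))) L hL hfp
    have hconst : (∑ i ∈ Finset.range L, t (fun j : Fin k => x (i + (j : ℕ)))) / (L : ℝ)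
        = (∑ w : Fin k → A, t w) / (b : ℝ) ^ k := by
      rw [hsum t, hLdef]
      push_cast
      rw [mul_div_mul_left]
      exact Nat.cast_ne_zero.mpr hm.ne'
    rw [hconst] at hc
    exact hc
  · intro h hh
    have h1b : (1 : ℝ) < b := by exact_mod_cast hb2.trans_lt' one_lt_two
    have hbR : (0 : ℝ) < b := by positivity
    have hmlt : L < b ^ h := by
      have hm' : (0 : ℝ) < m := by exact_mod_cast hm
      have e1 : (b : ℝ) ^ (Real.logb b m) = m := Real.rpow_logb hbR h1b.ne' hm'
      have e2 : ((L : ℕ) : ℝ) = (b : ℝ) ^ (Real.logb b m + k) := by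
        rw [hLdef]
        push_cast
        rw [Real.rpow_add hbR, e1, Real.rpow_natCast]
      have e3 : ((L : ℕ) : ℝ) < ((b ^ h : ℕ) : ℝ) := by
        rw [e2]
        push_cast
        calc (b : ℝ) ^ (Real.logb b m + (k : ℝ))
            < (b : ℝ) ^ ((h : ℕ) : ℝ) := by
              apply Real.rpow_lt_rpow_left_iff h1b |>.mpr
              linarith
          _ = (b : ℝ) ^ (h : ℕ) := Real.rpow_natCast b h
      exact_mod_cast e3
    have hnsurj : ¬ Function.Surjective
        (fun i : Fin L => (fun j : Fin h => x ((i : ℕ) + (j : ℕ)))) := by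
      intro hs
      have hle := Fintype.card_le_of_surjective _ hs
      rw [Fintype.card_fun, Fintype.card_fin, Fintype.card_fin, hb] at hle
      omega
    rw [Function.Surjective] at hnsurj
    push_neg at hnsurj
    obtain ⟨w, hw⟩ := hnsurj
    have hnotocc : ∀ i : ℕ, ¬ ∀ j : Fin h, x (i + (j : ℕ)) = w j := by
      intro i hi
      apply hw ⟨i % L, Nat.mod_lt i hL⟩
      funext j
      show x (i % L + (j : ℕ)) = w j
      have e : x (i % L + (j : ℕ)) = x (i + (j : ℕ)) := by
        rw [hxmod (i % L + (j : ℕ)), hxmod (i + (j : ℕ))]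
        congr 1
        conv_rhs => rw [Nat.add_mod]
        rw [Nat.add_mod (i % L) (j : ℕ), Nat.mod_mod_of_dvd i dvd_rfl]
      rw [e]
      exact hi j
    refine ⟨w, hnotocc, ?_, by positivity⟩
    have hz : ∀ n : ℕ, ∑ i ∈ Finset.range n,
        (if ∀ j : Fin h, x (i + (j : ℕ)) = w j then (1 : ℝ) else 0) = 0 :=
      fun n => Finset.sum_eq_zero fun i _ => if_neg (hnotocc i)
    have he : (fun n : ℕ =>
        |(1 / (n : ℝ)) * ∑ i ∈ Finset.range n,
            (if ∀ j : Fin h, x (i + (j : ℕ)) = w j then (1 : ℝ) else 0) -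
          1 / (b : ℝ) ^ h|) = fun _ => 1 / (b : ℝ) ^ h := by
      funext n
      rw [hz n, mul_zero, zero_sub, abs_neg, abs_of_nonneg (by positivity)]
    rw [he]
    exact tendsto_const_nhds
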